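/- Let a, b, c, d be nonzero real numbers with b*d ≠ a*c. Set p = (3*c*d − b^2) / (3*(b*d − a*c)^2), q = 2*(9*b*c*d + b^3) / (27*(b*d − a*c)^3) − c/(b*d − a*c)^2, Δ = (q/2)^2 + (p/3)^3, and let S = {x : ℝ | (b*d − a*c)^2 * x^4 − 2*b*(b*d − a*c) * x^3 + (b^2 + c*d) * x^2 − c*x = 0}. Then 0 ∈ S, and: if Δ < 0 then S has exactly 4 elements; if Δ > 0 then S has exactly 2 elements; if Δ = 0, p ≠ 0 and q ≠ 0 then S has exactly 3 elements; if Δ = 0 and p = 0 and q = 0 then S = {0, 2*b/(3*(b*d − a*c))}. -/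

import Mathlib

section CardanoHelpers

private lemma quad_rel' (p q x y : ℝ) (hx : x^3+p*x+q=0) (hy : y^3+p*y+q=0) (hxy : x ≠ y) :
    x^2+x*y+y^2+p = 0 := by
  have h := sub_ne_zero.mpr hxy
  have h2 : (x - y) * (x^2+x*y+y^2+p) = 0 := by linear_combination hx - hy
  exact (mul_eq_zero.mp h2).resolve_left h

private lemma three_roots_mem' (p q r1 r2 r3 t : ℝ)
    (h1 : r1^3+p*r1+q=0) (h2 : r2^3+p*r2+q=0) (h3 : r3^3+p*r3+q=0)
    (ht : t^3+p*t+q=0)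
    (d12 : r1 ≠ r2) (d13 : r1 ≠ r3) (d23 : r2 ≠ r3) :
    t = r1 ∨ t = r2 ∨ t = r3 := by
  by_contra h
  push_neg at h
  obtain ⟨n1, n2, n3⟩ := h
  have et2 := quad_rel' p q t r2 ht h2 n2
  have et3 := quad_rel' p q t r3 ht h3 n3
  have e12 := quad_rel' p q r1 r2 h1 h2 d12
  have e13 := quad_rel' p q r1 r3 h1 h3 d13
  have hh := sub_ne_zero.mpr n1
  have k2 : t + r1 + r2 = 0 := by
    have hz : (t - r1) * (t + r1 + r2) = 0 := by linear_combination et2 - e12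
    exact (mul_eq_zero.mp hz).resolve_left hh
  have k3 : t + r1 + r3 = 0 := by
    have hz : (t - r1) * (t + r1 + r3) = 0 := by linear_combination et3 - e13
    exact (mul_eq_zero.mp hz).resolve_left hh
  exact d23 (by linarith)

private lemma one_root_mem' (p q Δ r t : ℝ) (hΔ : Δ = (q/2)^2+(p/3)^3) (hΔpos : 0 < Δ)
    (hr : r^3+p*r+q=0) (ht : t^3+p*t+q=0) : t = r := by
  by_contra hne
  have e := quad_rel' p q t r ht hr hne
  have key : 108*Δ = (3*r^2+4*p)*(3*r^2+p)^2 := by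
    rw [hΔ]; linear_combination (27*(q - r^3 - p*r)) * hr
  have hpos : 0 < 3*r^2+4*p := by nlinarith [sq_nonneg (3*r^2+p)]
  nlinarith [sq_nonneg (2*t+r)]

private lemma cubic_big' (p q M : ℝ) (hM : M = 1 + |p| + |q|) :
    0 < M^3 + p*M + q ∧ (-M)^3 + p*(-M) + q < 0 := by
  have hap := abs_nonneg p
  have haq := abs_nonneg q
  have hp1 := le_abs_self p
  have hp2 := neg_abs_le p
  have hq1 := le_abs_self q
  have hq2 := neg_abs_le q
  have hM1 : (1:ℝ) ≤ M := by rw [hM]; linarith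
  have hM0 : (0:ℝ) < M := by linarith
  have e2 : M*M = M + M * |p| + M * |q| := by rw [hM]; ring
  have e3 : M*M*M ≥ M*M := by nlinarith
  have e4 : p*M ≥ -( |p| * M) := by nlinarith
  have e4' : p*M ≤ |p| * M := by nlinarith
  have e5 : M * |q| ≥ |q| := by nlinarith
  constructor
  · nlinarith
  · nlinarith

private lemma three_roots_exist' (p q Δ : ℝ) (hΔ : Δ = (q/2)^2+(p/3)^3) (hneg : Δ < 0) :
    ∃ r1 r2 r3 : ℝ, r1 < r2 ∧ r2 < r3 ∧
      r1^3+p*r1+q = 0 ∧ r2^3+p*r2+q = 0 ∧ r3^3+p*r3+q = 0 := by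
  have hq2 : (0:ℝ) ≤ (q/2)^2 := sq_nonneg _
  have hpneg : p < 0 := by nlinarith [sq_nonneg p]
  set m : ℝ := Real.sqrt (-p/3) with hm
  have hm0 : 0 < m := Real.sqrt_pos.mpr (by linarith)
  have hm2 : m^2 = -p/3 := Real.sq_sqrt (by linarith)
  have hp3 : p = -3*m^2 := by linarith
  have hm3 : 0 < m^3 := pow_pos hm0 3
  have hdisc : q^2 < 4 * m^6 := by
    have h6 : m^6 = (m^2)^3 := by ring
    rw [h6, hm2]; nlinarith
  have key1 : m^3 + p*m + q = q - 2*m^3 := by rw [hp3]; ring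
  have key2 : (-m)^3 + p*(-m) + q = q + 2*m^3 := by rw [hp3]; ring
  have hfm : m^3 + p*m + q < 0 := by
    rw [key1]
    have h66 : m^3 * m^3 = m^6 := by ring
    nlinarith [sq_nonneg (q - 2*m^3)]
  have hfnm : 0 < (-m)^3 + p*(-m) + q := by
    rw [key2]
    have h66 : m^3 * m^3 = m^6 := by ring
    nlinarith [sq_nonneg (q + 2*m^3)]
  set M : ℝ := 1 + |p| + |q| with hM
  obtain ⟨hfM, hfnM⟩ := cubic_big' p q M hM
  have hmM : m < M := by
    have haq := abs_nonneg q
    have hple : m^2 ≤ |p| := by rw [abs_of_neg hpneg]; linarith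
    nlinarith [sq_nonneg (m-1)]
  have hcont : ∀ u v : ℝ, ContinuousOn (fun x : ℝ => x^3+p*x+q) (Set.Icc u v) := by
    intro u v; fun_prop
  obtain ⟨r1, hr1m, hr1⟩ := intermediate_value_Ioo (by linarith : (-M:ℝ) ≤ -m)
    (hcont _ _) (by exact ⟨hfnM, hfnm⟩ : (0:ℝ) ∈ Set.Ioo ((-M)^3+p*(-M)+q) ((-m)^3+p*(-m)+q))
  obtain ⟨r2, hr2m, hr2⟩ := intermediate_value_Ioo' (by linarith : (-m:ℝ) ≤ m)
    (hcont _ _) (by exact ⟨hfm, hfnm⟩ : (0:ℝ) ∈ Set.Ioo (m^3+p*m+q) ((-m)^3+p*(-m)+q))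
  obtain ⟨r3, hr3m, hr3⟩ := intermediate_value_Ioo (by linarith : (m:ℝ) ≤ M)
    (hcont _ _) (by exact ⟨hfm, hfM⟩ : (0:ℝ) ∈ Set.Ioo (m^3+p*m+q) (M^3+p*M+q))
  exact ⟨r1, r2, r3, by linarith [hr1m.2, hr2m.1], by linarith [hr2m.2, hr3m.1], hr1, hr2, hr3⟩

private lemma exists_root' (p q : ℝ) : ∃ r, r^3+p*r+q = 0 := by
  set M : ℝ := 1 + |p| + |q| with hM
  obtain ⟨hfM, hfnM⟩ := cubic_big' p q M hM
  have hM0 : (0:ℝ) < M := by rw [hM]; positivity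
  have hcont : ContinuousOn (fun x : ℝ => x^3+p*x+q) (Set.Icc (-M) M) := by fun_prop
  obtain ⟨r, _, hr⟩ := intermediate_value_Icc (by linarith : (-M:ℝ) ≤ M) hcont
    (⟨hfnM.le, hfM.le⟩ : (0:ℝ) ∈ Set.Icc ((-M)^3+p*(-M)+q) (M^3+p*M+q))
  exact ⟨r, hr⟩

private lemma double_root_fact' (p q s r : ℝ) (hp : p ≠ 0)
    (hs : p * s = 3*q) (hr : 2*p*r = -(3*q)) (h4 : 4*p^3 = -(27*q^2)) :
    ∀ y : ℝ, y^3 + p*y + q = (y - s) * (y - r)^2 := by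
  have h1 : 4*p^2*r^2 = 9*q^2 := by linear_combination (2*p*r - 3*q) * hr
  have h2 : 2*p^2*(r*s) = -(9*q^2) := by linear_combination (p*s)*hr + (-3*q)*hs
  intro y
  have hp3 : (4:ℝ)*p^3 ≠ 0 := by positivity
  apply mul_left_cancel₀ hp3
  linear_combination (4*p^2*y^2 + 9*q^2) * hs + (4*p^2*y^2) * hr + (p*y + q) * h4
    + (s*p - p*y) * h1 + (-4*p*y) * h2

end CardanoHelpers

/-- Cardano analysis of the quartic equation for idempotents of the
two-dimensional evolution algebra of permutations, when `b*d ≠ a*c`. -/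
theorem stmt_14 (a b c d : ℝ) (ha : a ≠ 0) (hb : b ≠ 0) (hc : c ≠ 0) (hd : d ≠ 0)
    (hbd : b * d ≠ a * c)
    (p q Δ : ℝ)
    (hp : p = (3 * c * d - b ^ 2) / (3 * (b * d - a * c) ^ 2))
    (hq : q = 2 * (9 * b * c * d + b ^ 3) / (27 * (b * d - a * c) ^ 3) -
        c / (b * d - a * c) ^ 2)
    (hΔ : Δ = (q / 2) ^ 2 + (p / 3) ^ 3)
    (S : Set ℝ)
    (hS : S = {x : ℝ | (b * d - a * c) ^ 2 * x ^ 4 - 2 * b * (b * d - a * c) * x ^ 3 +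
        (b ^ 2 + c * d) * x ^ 2 - c * x = 0}) :
    (0 : ℝ) ∈ S ∧
    (Δ < 0 → S.ncard = 4) ∧
    (0 < Δ → S.ncard = 2) ∧
    (Δ = 0 → p ≠ 0 → q ≠ 0 → S.ncard = 3) ∧
    (Δ = 0 → p = 0 → q = 0 → S = {0, 2 * b / (3 * (b * d - a * c))}) := by
  have hk : b * d - a * c ≠ 0 := sub_ne_zero.mpr hbd
  set k : ℝ := b * d - a * c with hkdef
  set t : ℝ := 2 * b / (3 * k) with htdef
  have hk2 : k ^ 2 ≠ 0 := pow_ne_zero _ hk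
  have key : ∀ x : ℝ, k ^ 2 * x ^ 4 - 2 * b * k * x ^ 3 + (b ^ 2 + c * d) * x ^ 2 - c * x
      = k ^ 2 * (x * ((x - t) ^ 3 + p * (x - t) + q)) := by
    intro x
    rw [hp, hq, htdef]
    field_simp
    ring
  have hmem : ∀ x : ℝ, x ∈ S ↔ (x = 0 ∨ (x - t) ^ 3 + p * (x - t) + q = 0) := by
    intro x
    rw [hS]
    simp only [Set.mem_setOf_eq, key x, mul_eq_zero, hk2, false_or]
  have idc : k ^ 2 * ((0 - t) ^ 3 + p * (0 - t) + q) = -c := by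
    rw [hp, hq, htdef]
    field_simp
    ring
  have hnt : ∀ y : ℝ, y ^ 3 + p * y + q = 0 → y + t ≠ 0 := by
    intro y hy h0
    have hyt : y = 0 - t := by linarith
    rw [hyt] at hy
    rw [hy, mul_zero] at idc
    exact hc (by linarith)
  have hroot_shift : ∀ r : ℝ, r ^ 3 + p * r + q = 0 → (r + t) ∈ S := by
    intro r hr
    rw [hmem]
    right
    have : r + t - t = r := by ring
    rw [this]
    exact hr
  refine ⟨(hmem 0).mpr (Or.inl rfl), ?_, ?_, ?_, ?_⟩
  · -- Δ < 0 : four elements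
    intro hΔneg
    obtain ⟨r1, r2, r3, h12, h23, hr1, hr2, hr3⟩ := three_roots_exist' p q Δ hΔ hΔneg
    have h13 : r1 < r3 := h12.trans h23
    have hSet : S = {0, r1 + t, r2 + t, r3 + t} := by
      ext x
      rw [hmem x]
      simp only [Set.mem_insert_iff, Set.mem_singleton_iff]
      constructor
      · rintro (h | h)
        · exact Or.inl h
        · rcases three_roots_mem' p q r1 r2 r3 (x - t) hr1 hr2 hr3 h h12.ne h13.ne h23.ne with
            h' | h' | h'
          · exact Or.inr (Or.inl (by linarith))
          · exact Or.inr (Or.inr (Or.inl (by linarith)))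
          · exact Or.inr (Or.inr (Or.inr (by linarith)))
      · rintro (rfl | rfl | rfl | rfl)
        · exact Or.inl rfl
        all_goals right
        · have e : r1 + t - t = r1 := by ring
          rw [e]; exact hr1
        · have e : r2 + t - t = r2 := by ring
          rw [e]; exact hr2
        · have e : r3 + t - t = r3 := by ring
          rw [e]; exact hr3
    rw [hSet]
    have n1 := hnt r1 hr1
    have n2 := hnt r2 hr2
    have n3 := hnt r3 hr3
    rw [Set.ncard_insert_of_notMem (by
        simp only [Set.mem_insert_iff, Set.mem_singleton_iff]
        push_neg
        exact ⟨fun h => n1 h.symm, fun h => n2 h.symm, fun h => n3 h.symm⟩)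
      (Set.toFinite _)]
    rw [Set.ncard_insert_of_notMem (by
        simp only [Set.mem_insert_iff, Set.mem_singleton_iff]
        push_neg
        exact ⟨by intro h; exact absurd (by linarith : r1 = r2) h12.ne,
               by intro h; exact absurd (by linarith : r1 = r3) h13.ne⟩)
      (Set.toFinite _)]
    rw [Set.ncard_pair (by intro h; exact absurd (by linarith : r2 = r3) h23.ne)]
  · -- 0 < Δ : two elements
    intro hΔpos
    obtain ⟨r, hr⟩ := exists_root' p q
    have hSet : S = {0, r + t} := by
      ext x
      rw [hmem x]
      simp only [Set.mem_insert_iff, Set.mem_singleton_iff]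
      constructor
      · rintro (h | h)
        · exact Or.inl h
        · have := one_root_mem' p q Δ r (x - t) hΔ hΔpos hr h
          exact Or.inr (by linarith)
      · rintro (rfl | rfl)
        · exact Or.inl rfl
        · right
          have e : r + t - t = r := by ring
          rw [e]; exact hr
    rw [hSet, Set.ncard_pair (fun h => hnt r hr h.symm)]
  · -- Δ = 0, p ≠ 0, q ≠ 0 : three elements
    intro hΔ0 hpne hqne
    have hsum : (q / 2) ^ 2 + (p / 3) ^ 3 = 0 := by rw [← hΔ, hΔ0]
    have h4 : 4 * p ^ 3 = -(27 * q ^ 2) := by linear_combination 108 * hsum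
    set s : ℝ := 3 * q / p with hsdef
    set r : ℝ := -(3 * q) / (2 * p) with hrdef
    have hs : p * s = 3 * q := by rw [hsdef]; field_simp
    have hr : 2 * p * r = -(3 * q) := by rw [hrdef]; field_simp
    have fact := double_root_fact' p q s r hpne hs hr h4
    have hsr : s ≠ r := by
      intro h
      rw [h] at hs
      have : (9:ℝ) * q = 0 := by linarith [hr]
      exact hqne (by linarith)
    have hsroot : s ^ 3 + p * s + q = 0 := by rw [fact s]; ring
    have hrroot : r ^ 3 + p * r + q = 0 := by rw [fact r]; ring
    have hSet : S = {0, s + t, r + t} := by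
      ext x
      rw [hmem x]
      simp only [Set.mem_insert_iff, Set.mem_singleton_iff]
      constructor
      · rintro (h | h)
        · exact Or.inl h
        · rw [fact (x - t), mul_eq_zero, sub_eq_zero, pow_eq_zero_iff (by norm_num : 2 ≠ 0),
            sub_eq_zero] at h
          rcases h with h | h
          · exact Or.inr (Or.inl (by linarith))
          · exact Or.inr (Or.inr (by linarith))
      · rintro (rfl | rfl | rfl)
        · exact Or.inl rfl
        · right
          have e : s + t - t = s := by ring
          rw [e]; exact hsroot
        · right
          have e : r + t - t = r := by ring
          rw [e]; exact hrroot
    rw [hSet]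
    have ns := hnt s hsroot
    have nr := hnt r hrroot
    rw [Set.ncard_insert_of_notMem (by
        simp only [Set.mem_insert_iff, Set.mem_singleton_iff]
        push_neg
        exact ⟨fun h => ns h.symm, fun h => nr h.symm⟩)
      (Set.toFinite _)]
    rw [Set.ncard_pair (by intro h; exact absurd (by linarith : s = r) hsr)]
  · -- Δ = 0, p = 0, q = 0
    intro _ hp0 hq0
    ext x
    rw [hmem x, hp0, hq0]
    simp only [Set.mem_insert_iff, Set.mem_singleton_iff, zero_mul, add_zero, mul_zero]
    constructor
    · rintro (h | h)
      · exact Or.inl h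
      · have hxt : x - t = 0 := pow_eq_zero_iff (by norm_num : (3:ℕ) ≠ 0) |>.mp h
        exact Or.inr (by linarith)
    · rintro (rfl | rfl)
      · exact Or.inl rfl
      · right
        have e : t - t = 0 := by ring
        rw [e]
        ring
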